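/- With the same setup, for a distribution over states where each state has at most |A| actions and the regression errors satisfy E_{(s,a)}[(Q_θ(s,a) − Q*(s,a))²] ≤ ε where (s, a) is drawn by sampling s and then a uniformly from A(s), the expected classification regret satisfies E_s[Q*(s, â_s) − min_a Q*(s, a)] ≤ 2√(|A| ε). -/

import Mathlib

/-- Reduction of expected classification regret to expected squared regression error:
if the mean squared error under uniform action sampling is at most `ε` and every action
set has at most `K` actions, the expected regret is at most `2√(Kε)`. -/
theorem expected_regret_le_sqrt_regression_error
    {S α : Type*} [Fintype S] (K : ℕ) (ε : ℝ)
    (w : S → ℝ) (hw0 : ∀ s, 0 ≤ w s) (hw1 : ∑ s, w s = 1)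
    (A : S → Finset α) (hne : ∀ s, (A s).Nonempty) (hcard : ∀ s, (A s).card ≤ K)
    (Qθ Qstar : S → α → ℝ)
    (ahat : S → α) (hmem : ∀ s, ahat s ∈ A s)
    (hmin : ∀ s, ∀ a ∈ A s, Qθ s (ahat s) ≤ Qθ s a)
    (hreg : ∑ s, w s * (((A s).card : ℝ)⁻¹ *
      ∑ a ∈ A s, (Qθ s a - Qstar s a) ^ 2) ≤ ε) :
    ∑ s, w s * (Qstar s (ahat s) - (A s).inf' (hne s) (Qstar s))
      ≤ 2 * Real.sqrt (K * ε) := by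
  set r : S → ℝ := fun s => Qstar s (ahat s) - (A s).inf' (hne s) (Qstar s) with hr
  set m : S → ℝ := fun s => ((A s).card : ℝ)⁻¹ * ∑ a ∈ A s, (Qθ s a - Qstar s a) ^ 2 with hm
  have hr0 : ∀ s, 0 ≤ r s := fun s =>
    sub_nonneg.2 (Finset.inf'_le _ (hmem s))
  have hm0 : ∀ s, 0 ≤ m s := fun s =>
    mul_nonneg (inv_nonneg.2 (Nat.cast_nonneg _))
      (Finset.sum_nonneg fun a _ => sq_nonneg _)
  have hε : 0 ≤ ε :=
    le_trans (Finset.sum_nonneg fun s _ => mul_nonneg (hw0 s) (hm0 s)) hreg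
  -- pointwise: (r s)^2 ≤ 4 * K * m s
  have hpt : ∀ s, (r s) ^ 2 ≤ 4 * K * m s := by
    intro s
    obtain ⟨b, hb, hbeq⟩ := Finset.exists_mem_eq_inf' (hne s) (Qstar s)
    have hcard0 : (0:ℝ) < ((A s).card : ℝ) := by
      exact_mod_cast Finset.card_pos.2 (hne s)
    have hsum : ∑ a ∈ A s, (Qθ s a - Qstar s a) ^ 2 = ((A s).card : ℝ) * m s := by
      simp only [hm]
      rw [← mul_assoc, mul_inv_cancel₀ hcard0.ne', one_mul]
    have h1 : r s ≤ |Qθ s (ahat s) - Qstar s (ahat s)| + |Qθ s b - Qstar s b| := by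
      have := hmin s b hb
      have h2 : r s = Qstar s (ahat s) - Qstar s b := by
        show Qstar s (ahat s) - (A s).inf' (hne s) (Qstar s) = _
        rw [hbeq]
      rw [h2]
      have := abs_le.1 (le_refl |Qθ s (ahat s) - Qstar s (ahat s)|)
      calc Qstar s (ahat s) - Qstar s b
          = (Qstar s (ahat s) - Qθ s (ahat s)) + (Qθ s (ahat s) - Qθ s b)
            + (Qθ s b - Qstar s b) := by ring
        _ ≤ |Qθ s (ahat s) - Qstar s (ahat s)| + 0 + |Qθ s b - Qstar s b| := by
            gcongr
            · rw [abs_sub_comm]; exact le_abs_self _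
            · linarith [hmin s b hb]
            · exact le_abs_self _
        _ = _ := by ring
    have hsq : (r s)^2 ≤ (|Qθ s (ahat s) - Qstar s (ahat s)| + |Qθ s b - Qstar s b|)^2 := by
      apply pow_le_pow_left₀ (hr0 s) h1
    have h3 : (|Qθ s (ahat s) - Qstar s (ahat s)| + |Qθ s b - Qstar s b|)^2
        ≤ 2 * ((Qθ s (ahat s) - Qstar s (ahat s))^2 + (Qθ s b - Qstar s b)^2) := by
      have := sq_abs (Qθ s (ahat s) - Qstar s (ahat s))
      have := sq_abs (Qθ s b - Qstar s b)
      nlinarith [sq_nonneg (|Qθ s (ahat s) - Qstar s (ahat s)| - |Qθ s b - Qstar s b|)]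
    have h4 : (Qθ s (ahat s) - Qstar s (ahat s))^2 ≤ ∑ a ∈ A s, (Qθ s a - Qstar s a) ^ 2 :=
      Finset.single_le_sum (f := fun a => (Qθ s a - Qstar s a)^2) (fun a _ => sq_nonneg _) (hmem s)
    have h5 : (Qθ s b - Qstar s b)^2 ≤ ∑ a ∈ A s, (Qθ s a - Qstar s a) ^ 2 :=
      Finset.single_le_sum (f := fun a => (Qθ s a - Qstar s a)^2) (fun a _ => sq_nonneg _) hb
    have h6 : ∑ a ∈ A s, (Qθ s a - Qstar s a) ^ 2 ≤ (K:ℝ) * m s := by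
      rw [hsum]
      have : ((A s).card : ℝ) ≤ (K:ℝ) := by exact_mod_cast hcard s
      exact mul_le_mul_of_nonneg_right this (hm0 s)
    calc (r s)^2 ≤ 2 * ((Qθ s (ahat s) - Qstar s (ahat s))^2 + (Qθ s b - Qstar s b)^2) :=
          hsq.trans h3
      _ ≤ 2 * (((K:ℝ) * m s) + ((K:ℝ) * m s)) := by gcongr <;> [exact h4.trans h6; exact h5.trans h6]
      _ = 4 * K * m s := by ring
  -- Cauchy-Schwarz / Jensen
  have hCS : (∑ s, w s * r s) ^ 2 ≤ ∑ s, w s * (r s)^2 := by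
    have := Finset.sum_mul_sq_le_sq_mul_sq Finset.univ
      (fun s => Real.sqrt (w s)) (fun s => Real.sqrt (w s) * r s)
    have e1 : ∀ s : S, Real.sqrt (w s) * (Real.sqrt (w s) * r s) = w s * r s := by
      intro s
      rw [← mul_assoc, Real.mul_self_sqrt (hw0 s)]
    have e2 : ∀ s : S, (Real.sqrt (w s))^2 = w s := fun s => Real.sq_sqrt (hw0 s)
    have e3 : ∀ s : S, (Real.sqrt (w s) * r s)^2 = w s * (r s)^2 := by
      intro s; rw [mul_pow, e2]
    simp only [e1, e2, e3] at this
    calc (∑ s, w s * r s) ^ 2 ≤ (∑ s, w s) * ∑ s, w s * (r s)^2 := this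
      _ = ∑ s, w s * (r s)^2 := by rw [hw1, one_mul]
  have hbound : (∑ s, w s * r s) ^ 2 ≤ 4 * K * ε := by
    calc (∑ s, w s * r s) ^ 2 ≤ ∑ s, w s * (r s)^2 := hCS
      _ ≤ ∑ s, w s * (4 * K * m s) := by
          apply Finset.sum_le_sum
          intro s _
          exact mul_le_mul_of_nonneg_left (hpt s) (hw0 s)
      _ = 4 * K * ∑ s, w s * m s := by
          rw [Finset.mul_sum]; congr 1; ext s; ring
      _ ≤ 4 * K * ε := by
          have h4K : (0:ℝ) ≤ 4 * K := by positivity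
          exact mul_le_mul_of_nonneg_left hreg h4K
  have hnn : 0 ≤ ∑ s, w s * r s :=
    Finset.sum_nonneg fun s _ => mul_nonneg (hw0 s) (hr0 s)
  have hfin : ∑ s, w s * r s ≤ Real.sqrt (4 * K * ε) := by
    rw [show Real.sqrt (4 * K * ε) = Real.sqrt (4 * ((K:ℝ) * ε)) by ring_nf]
    have hy : (0:ℝ) ≤ 4 * ((K:ℝ) * ε) := by
      have : (0:ℝ) ≤ (K:ℝ) * ε := mul_nonneg (Nat.cast_nonneg _) hε
      linarith
    exact (Real.le_sqrt hnn hy).2 (by linarith [hbound])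
  calc ∑ s, w s * r s ≤ Real.sqrt (4 * K * ε) := hfin
    _ = 2 * Real.sqrt (K * ε) := by
        rw [show (4:ℝ) * K * ε = 2^2 * ((K:ℝ) * ε) by ring, Real.sqrt_mul (by positivity),
          Real.sqrt_sq (by norm_num)]
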